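/- Let μ be the arcsine measure with density 1/(π√(w(1-w))) on (0,1). For any p = (p_0,...,p_k) ∈ [0,1]^{k+1} with p_0 = 0 and p_k = 1: ∫_0^1 ∑_{z=0}^k α_z(w)(p_z - ∑_{z'} α_{z'}(w) p_{z'})² · (1/(π√(w(1-w)))) dw ≥ 1/(k π²), where α_z(w) = C(k,z) w^z (1-w)^{k-z}. -/

import Mathlib

open Finset MeasureTheory Set intervalIntegral

noncomputable def alph (k z : ℕ) (w : ℝ) : ℝ :=
  (k.choose z : ℝ) * w ^ z * (1 - w) ^ (k - z)

noncomputable def dalph (k z : ℕ) (w : ℝ) : ℝ :=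
  (k.choose z : ℝ) * ((z : ℝ) * w ^ (z - 1) * (1 - w) ^ (k - z)
    - ((k - z : ℕ) : ℝ) * w ^ z * (1 - w) ^ (k - z - 1))

noncomputable def Gfun (k : ℕ) (p : ℕ → ℝ) (w : ℝ) : ℝ :=
  ∑ z ∈ range (k + 1), alph k z w * p z

noncomputable def dGfun (k : ℕ) (p : ℕ → ℝ) (w : ℝ) : ℝ :=
  ∑ z ∈ range (k + 1), dalph k z w * p z

noncomputable def Vfun (k : ℕ) (p : ℕ → ℝ) (w : ℝ) : ℝ :=
  ∑ z ∈ range (k + 1), alph k z w * (p z - Gfun k p w) ^ 2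

lemma hasDerivAt_alph (k z : ℕ) (w : ℝ) :
    HasDerivAt (fun x => alph k z x) (dalph k z w) w := by
  have h1 : HasDerivAt (fun x : ℝ => x ^ z) ((z : ℝ) * w ^ (z - 1)) w := hasDerivAt_pow z w
  have h2 : HasDerivAt (fun x : ℝ => (1 - x) ^ (k - z))
      (((k - z : ℕ) : ℝ) * (1 - w) ^ (k - z - 1) * (-1)) w := by
    have := (hasDerivAt_pow (k - z) (1 - w)).comp w
      (((hasDerivAt_id w).const_sub 1))
    exact this
  have h3 := (h1.const_mul ((k.choose z : ℝ))).mul h2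
  convert h3 using 1; rfl; rfl; rfl
  simp [dalph]; ring

lemma wdalph (k z : ℕ) (hz : z ≤ k) (w : ℝ) :
    w * (1 - w) * dalph k z w = ((z : ℝ) - k * w) * alph k z w := by
  rcases z with _ | a
  · rcases k with _ | m
    · simp [dalph, alph]
    · simp only [dalph, alph, Nat.cast_zero, zero_mul, pow_zero, Nat.sub_zero,
        Nat.choose_zero_right, Nat.cast_one, zero_sub, mul_one, one_mul]
      rw [show m + 1 - 1 = m from rfl, pow_succ]
      push_cast
      ring
  · rcases Nat.lt_or_ge (a + 1) k with hlt | hge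
    · obtain ⟨b, hb⟩ : ∃ b, k - (a + 1) = b + 1 := ⟨k - (a+1) - 1, by omega⟩
      have hk2 : k = a + b + 2 := by omega
      subst hk2
      have e1 : a + b + 2 - (a + 1) = b + 1 := by omega
      have e2 : a + b + 2 - (a + 1) - 1 = b := by omega
      have e3 : a + 1 - 1 = a := rfl
      simp only [dalph, alph, e1, e2, e3]
      push_cast
      rw [pow_succ w a, pow_succ (1-w) b]
      ring
    · have hzk : a + 1 = k := le_antisymm hz hge
      subst hzk
      simp only [dalph, alph, Nat.sub_self, pow_zero, Nat.cast_zero, zero_mul, mul_one,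
        show a + 1 - 1 = a from rfl]
      push_cast
      rw [pow_succ w a]
      ring

lemma alph_sum (k : ℕ) (w : ℝ) : ∑ z ∈ range (k + 1), alph k z w = 1 := by
  have h : ∀ z ∈ range (k+1), alph k z w = w ^ z * (1 - w) ^ (k - z) * (k.choose z : ℝ) :=
    fun z _ => by unfold alph; ring
  rw [Finset.sum_congr rfl h, ← add_pow]
  norm_num

lemma alph_step (k z : ℕ) (w : ℝ) (hz : z ≤ k) :
    ((z + 1 : ℕ) : ℝ) * alph (k + 1) (z + 1) w = ((k + 1 : ℕ) : ℝ) * w * alph k z w := by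
  have hC : (k + 1) * k.choose z = (k + 1).choose (z + 1) * (z + 1) := Nat.add_one_mul_choose_eq k z
  have hCr : ((k + 1 : ℕ) : ℝ) * (k.choose z : ℝ) = ((k + 1).choose (z + 1) : ℝ) * ((z + 1 : ℕ) : ℝ) := by
    exact_mod_cast congrArg (Nat.cast : ℕ → ℝ) hC
  unfold alph
  rw [Nat.succ_sub_succ]
  rw [pow_succ w z]
  push_cast at hCr ⊢
  linear_combination (-(w ^ z * w * (1 - w) ^ (k - z))) * hCr

lemma alph_sum_z (k : ℕ) (w : ℝ) :
    ∑ z ∈ range (k + 1), (z : ℝ) * alph k z w = k * w := by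
  rcases k with _ | m
  · simp
  · rw [Finset.sum_range_succ']
    simp only [Nat.cast_zero, zero_mul, add_zero]
    have h : ∀ z ∈ range (m + 1), ((z + 1 : ℕ) : ℝ) * alph (m + 1) (z + 1) w
        = ((m + 1 : ℕ) : ℝ) * w * alph m z w := by
      intro z hz
      exact alph_step m z w (by simpa using Nat.lt_succ_iff.mp (mem_range.mp hz))
    calc ∑ z ∈ range (m + 1), (↑(z + 1) : ℝ) * alph (m + 1) (z + 1) w
        = ∑ z ∈ range (m + 1), ((m + 1 : ℕ) : ℝ) * w * alph m z w := Finset.sum_congr rfl h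
      _ = ((m + 1 : ℕ) : ℝ) * w * ∑ z ∈ range (m + 1), alph m z w := by
          rw [Finset.mul_sum]
      _ = (↑(m + 1) : ℝ) * w := by rw [alph_sum, mul_one]

lemma alph_sum_zz (k : ℕ) (w : ℝ) :
    ∑ z ∈ range (k + 1), (z : ℝ) * ((z : ℝ) - 1) * alph k z w = k * ((k : ℝ) - 1) * w ^ 2 := by
  rcases k with _ | m
  · simp
  · rw [Finset.sum_range_succ']
    simp only [Nat.cast_zero, zero_mul, add_zero]
    have h : ∀ z ∈ range (m + 1), (↑(z + 1) : ℝ) * ((↑(z + 1) : ℝ) - 1) * alph (m + 1) (z + 1) w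
        = ((m + 1 : ℕ) : ℝ) * w * ((z : ℝ) * alph m z w) := by
      intro z hz
      have := alph_step m z w (by simpa using Nat.lt_succ_iff.mp (mem_range.mp hz))
      push_cast at this ⊢
      nlinarith [this]
    rw [Finset.sum_congr rfl h, ← Finset.mul_sum, alph_sum_z]
    push_cast
    ring

lemma alph_var (k : ℕ) (w : ℝ) :
    ∑ z ∈ range (k + 1), ((z : ℝ) - k * w) ^ 2 * alph k z w = k * w * (1 - w) := by
  have h : ∀ z ∈ range (k+1), ((z : ℝ) - k * w) ^ 2 * alph k z w
      = (z : ℝ) * ((z : ℝ) - 1) * alph k z w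
        + (1 - 2 * (k : ℝ) * w) * ((z : ℝ) * alph k z w)
        + ((k : ℝ) * w) ^ 2 * alph k z w := fun z _ => by ring
  rw [Finset.sum_congr rfl h]
  rw [Finset.sum_add_distrib, Finset.sum_add_distrib, ← Finset.mul_sum, ← Finset.mul_sum,
    alph_sum, alph_sum_z, alph_sum_zz]
  ring

lemma arcsine_meas : Measurable (fun w : ℝ => 1 / Real.sqrt (w * (1 - w))) := by
  simp only [one_div]
  exact ((Real.continuous_sqrt.comp (continuous_id.mul (continuous_const.sub continuous_id))).measurable).inv

lemma arcsine_intble : IntervalIntegrable (fun w : ℝ => 1 / Real.sqrt (w * (1 - w)))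
    volume 0 1 := by
  have h1 : IntervalIntegrable (fun w : ℝ => 1 / Real.sqrt (w * (1 - w))) volume 0 (1/2) := by
    rw [intervalIntegrable_iff_integrableOn_Ioc_of_le (by norm_num)]
    have hg : IntegrableOn (fun w : ℝ => Real.sqrt 2 * w ^ (-(1/2) : ℝ)) (Ioc 0 (1/2)) volume := by
      have := (intervalIntegrable_rpow' (a := 0) (b := 1/2) (r := -(1/2)) (by norm_num)).const_mul (Real.sqrt 2)
      rwa [intervalIntegrable_iff_integrableOn_Ioc_of_le (by norm_num)] at this
    refine hg.integrable.mono' arcsine_meas.aestronglyMeasurable ?_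
    refine (ae_restrict_iff' measurableSet_Ioc).2 (Filter.Eventually.of_forall ?_)
    rintro w ⟨hw0, hw1⟩
    rw [Real.norm_eq_abs, abs_of_nonneg (by positivity)]
    have hs : Real.sqrt (w * (1/2)) ≤ Real.sqrt (w * (1 - w)) :=
      Real.sqrt_le_sqrt (by nlinarith)
    have hpos : 0 < Real.sqrt (w * (1/2)) := Real.sqrt_pos.2 (by nlinarith)
    have := one_div_le_one_div_of_le hpos hs
    refine this.trans_eq ?_
    rw [show w * (1/2) = w / 2 by ring]
    have e1 : w ^ (-(1/2) : ℝ) = (Real.sqrt w)⁻¹ := by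
      rw [Real.rpow_neg hw0.le, Real.sqrt_eq_rpow]
    have e2 : Real.sqrt (w / 2) = Real.sqrt w / Real.sqrt 2 := Real.sqrt_div hw0.le 2
    have hw : 0 < Real.sqrt w := Real.sqrt_pos.2 hw0
    have h2 : 0 < Real.sqrt 2 := by positivity
    rw [e1, e2]
    field_simp
  have h2 : IntervalIntegrable (fun w : ℝ => 1 / Real.sqrt (w * (1 - w))) volume (1/2) 1 := by
    have hc : IntervalIntegrable (fun w : ℝ => 1 / Real.sqrt ((1 - w) * (1 - (1 - w))))
        volume (1 - 0) (1 - 1/2) := h1.comp_sub_left 1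
    norm_num at hc
    have := hc.symm
    refine IntervalIntegrable.congr_ae this ?_
    refine Filter.EventuallyEq.of_eq (funext fun w => ?_)
    rw [mul_comm, one_div]
  exact h1.trans h2


lemma arcsine_integral :
    ∫ w in (0:ℝ)..1, 1 / Real.sqrt (w * (1 - w)) = Real.pi := by
  have hder : ∀ x ∈ Ioo (0:ℝ) 1,
      HasDerivAt (fun w => Real.arcsin (2 * w - 1)) (1 / Real.sqrt (x * (1 - x))) x := by
    rintro x ⟨hx0, hx1⟩
    have h1 : (2 * x - 1) ≠ -1 := by intro h; nlinarith [h]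
    have h2 : (2 * x - 1) ≠ 1 := by intro h; nlinarith [h]
    have ha := Real.hasDerivAt_arcsin h1 h2
    have hl : HasDerivAt (fun w : ℝ => 2 * w - 1) 2 x := by
      simpa using ((hasDerivAt_id x).const_mul 2).sub_const 1
    have := ha.comp x hl
    convert this using 1; rfl; rfl; rfl
    have e : 1 - (2 * x - 1) ^ 2 = 4 * (x * (1 - x)) := by ring
    have e2 : Real.sqrt (4 * (x * (1 - x))) = 2 * Real.sqrt (x * (1 - x)) := by
      rw [show (4 : ℝ) * (x * (1 - x)) = 2 ^ 2 * (x * (1 - x)) by ring,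
        Real.sqrt_mul (by positivity), Real.sqrt_sq (by norm_num : (0:ℝ) ≤ 2)]
    rw [e, e2]
    have hs : 0 < Real.sqrt (x * (1 - x)) := Real.sqrt_pos.2 (by nlinarith)
    field_simp
  have ha : Filter.Tendsto (fun w => Real.arcsin (2 * w - 1)) (nhdsWithin 0 (Ioi 0))
      (nhds (-(Real.pi / 2))) := by
    have : Filter.Tendsto (fun w : ℝ => Real.arcsin (2 * w - 1)) (nhds 0)
        (nhds (Real.arcsin (2 * 0 - 1))) :=
      (Real.continuous_arcsin.comp (by continuity)).tendsto 0
    have h' := this.mono_left (nhdsWithin_le_nhds (s := Ioi (0:ℝ)))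
    norm_num [Real.arcsin_neg_one] at h'
    exact h'
  have hb : Filter.Tendsto (fun w => Real.arcsin (2 * w - 1)) (nhdsWithin 1 (Iio 1))
      (nhds (Real.pi / 2)) := by
    have : Filter.Tendsto (fun w : ℝ => Real.arcsin (2 * w - 1)) (nhds 1)
        (nhds (Real.arcsin (2 * 1 - 1))) :=
      (Real.continuous_arcsin.comp (by continuity)).tendsto 1
    have h' := this.mono_left (nhdsWithin_le_nhds (s := Iio (1:ℝ)))
    norm_num [Real.arcsin_one] at h'
    exact h'
  rw [intervalIntegral.integral_eq_sub_of_hasDerivAt_of_tendsto (by norm_num) hder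
    arcsine_intble ha hb]
  ring

lemma alph_nonneg (k z : ℕ) {w : ℝ} (hw : w ∈ Icc (0:ℝ) 1) : 0 ≤ alph k z w := by
  obtain ⟨h0, h1⟩ := hw
  unfold alph
  have : (0:ℝ) ≤ 1 - w := by linarith
  positivity

lemma Gfun_cont (k : ℕ) (p : ℕ → ℝ) : Continuous (Gfun k p) := by
  unfold Gfun alph
  exact continuous_finset_sum _ fun z _ => by fun_prop

lemma dGfun_cont (k : ℕ) (p : ℕ → ℝ) : Continuous (dGfun k p) := by
  unfold dGfun dalph
  exact continuous_finset_sum _ fun z _ => by fun_prop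

lemma Vfun_cont (k : ℕ) (p : ℕ → ℝ) : Continuous (Vfun k p) := by
  unfold Vfun
  refine continuous_finset_sum _ fun z _ => ?_
  have h1 : Continuous (alph k z) := by unfold alph; fun_prop
  exact h1.mul ((continuous_const.sub (Gfun_cont k p)).pow 2)

lemma Gfun_zero (k : ℕ) (p : ℕ → ℝ) (h0 : p 0 = 0) : Gfun k p 0 = 0 := by
  unfold Gfun
  rw [Finset.sum_eq_single 0]
  · simp [alph, h0]
  · intro b _ hb
    simp [alph, zero_pow hb]
  · intro hmem; exact absurd (Finset.mem_range.2 (Nat.succ_pos k)) hmem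

lemma Gfun_one (k : ℕ) (p : ℕ → ℝ) (hk1 : p k = 1) : Gfun k p 1 = 1 := by
  unfold Gfun
  rw [Finset.sum_eq_single k]
  · simp [alph, hk1]
  · intro b hb hbk
    have : k - b ≠ 0 := by
      have := Finset.mem_range.1 hb; omega
    simp [alph, zero_pow this]
  · intro hmem; exact absurd (Finset.mem_range.2 (Nat.lt_succ_self k)) hmem

lemma sum_zkw_alph (k : ℕ) (w : ℝ) :
    ∑ z ∈ range (k + 1), ((z : ℝ) - k * w) * alph k z w = 0 := by
  have e : ∀ z ∈ range (k+1), ((z:ℝ) - k*w) * alph k z w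
      = (z:ℝ) * alph k z w - (k*w) * alph k z w := fun z _ => by ring
  rw [Finset.sum_congr rfl e, Finset.sum_sub_distrib, ← Finset.mul_sum, alph_sum_z, alph_sum,
    mul_one, sub_self]

lemma sum_zkw_alph_p (k : ℕ) (p : ℕ → ℝ) (w : ℝ) :
    ∑ z ∈ range (k + 1), ((z : ℝ) - k * w) * alph k z w * p z
      = w * (1 - w) * dGfun k p w := by
  have e : ∀ z ∈ range (k+1), ((z:ℝ) - k*w) * alph k z w * p z
      = w * (1 - w) * (dalph k z w * p z) := by
    intro z hz
    rw [← wdalph k z (Nat.lt_succ_iff.mp (Finset.mem_range.mp hz)) w]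
    ring
  rw [Finset.sum_congr rfl e, ← Finset.mul_sum, dGfun]

lemma Gfun_hasDeriv (k : ℕ) (p : ℕ → ℝ) (w : ℝ) :
    HasDerivAt (Gfun k p) (dGfun k p w) w := by
  unfold Gfun dGfun
  exact HasDerivAt.fun_sum fun z _ => (hasDerivAt_alph k z w).mul_const (p z)

lemma dGfun_FTC (k : ℕ) (p : ℕ → ℝ) (h0 : p 0 = 0) (hk1 : p k = 1) :
    ∫ w in (0:ℝ)..1, dGfun k p w = 1 := by
  rw [intervalIntegral.integral_eq_sub_of_hasDerivAt (fun x _ => Gfun_hasDeriv k p x)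
    ((dGfun_cont k p).intervalIntegrable 0 1), Gfun_one k p hk1, Gfun_zero k p h0, sub_zero]

lemma Gfun_mem (k : ℕ) (p : ℕ → ℝ) (hp : ∀ z ≤ k, p z ∈ Icc (0:ℝ) 1) {w : ℝ}
    (hw : w ∈ Icc (0:ℝ) 1) : Gfun k p w ∈ Icc (0:ℝ) 1 := by
  constructor
  · exact Finset.sum_nonneg fun z hz => mul_nonneg (alph_nonneg k z hw)
      (hp z (Nat.lt_succ_iff.mp (Finset.mem_range.mp hz))).1
  · calc Gfun k p w ≤ ∑ z ∈ range (k+1), alph k z w := by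
          refine Finset.sum_le_sum fun z hz => ?_
          have h1 := alph_nonneg k z hw
          have h2 := (hp z (Nat.lt_succ_iff.mp (Finset.mem_range.mp hz))).2
          nlinarith
      _ = 1 := alph_sum k w

lemma Vfun_le_one (k : ℕ) (p : ℕ → ℝ) (hp : ∀ z ≤ k, p z ∈ Icc (0:ℝ) 1) {w : ℝ}
    (hw : w ∈ Icc (0:ℝ) 1) : Vfun k p w ≤ 1 := by
  calc Vfun k p w ≤ ∑ z ∈ range (k+1), alph k z w := by
        refine Finset.sum_le_sum fun z hz => ?_
        have h1 := alph_nonneg k z hw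
        have h2 := hp z (Nat.lt_succ_iff.mp (Finset.mem_range.mp hz))
        have h3 := Gfun_mem k p hp hw
        have h4 : (p z - Gfun k p w)^2 ≤ 1 := by
          have := h2.1; have := h2.2; have := h3.1; have := h3.2
          nlinarith
        nlinarith
    _ = 1 := alph_sum k w

lemma Vfun_nonneg (k : ℕ) (p : ℕ → ℝ) {w : ℝ} (hw : w ∈ Icc (0:ℝ) 1) : 0 ≤ Vfun k p w :=
  Finset.sum_nonneg fun z _ => mul_nonneg (alph_nonneg k z hw) (sq_nonneg _)

lemma Vfun_lower (k : ℕ) (hk : 1 ≤ k) (p : ℕ → ℝ) {w : ℝ} (hw : w ∈ Icc (0:ℝ) 1) :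
    w * (1 - w) * dGfun k p w ^ 2 / k ≤ Vfun k p w := by
  have hk0 : (0:ℝ) < k := by exact_mod_cast hk
  set lam : ℝ := dGfun k p w / k with hlam
  have hnn : (0:ℝ) ≤ ∑ z ∈ range (k+1),
      alph k z w * ((p z - Gfun k p w) - lam * ((z:ℝ) - k*w))^2 :=
    Finset.sum_nonneg fun z _ => mul_nonneg (alph_nonneg k z hw) (sq_nonneg _)
  have e : ∀ z ∈ range (k+1), alph k z w * ((p z - Gfun k p w) - lam * ((z:ℝ) - k*w))^2
      = alph k z w * (p z - Gfun k p w)^2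
        - 2 * lam * (((z:ℝ) - k*w) * alph k z w * p z)
        + 2 * lam * Gfun k p w * (((z:ℝ) - k*w) * alph k z w)
        + lam^2 * (((z:ℝ) - k*w)^2 * alph k z w) := fun z _ => by ring
  rw [Finset.sum_congr rfl e, Finset.sum_add_distrib, Finset.sum_add_distrib,
    Finset.sum_sub_distrib, ← Finset.mul_sum, ← Finset.mul_sum, ← Finset.mul_sum,
    sum_zkw_alph_p, sum_zkw_alph, alph_var, mul_zero] at hnn
  have hVe : ∑ z ∈ range (k+1), alph k z w * (p z - Gfun k p w)^2 = Vfun k p w := rfl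
  rw [hVe] at hnn
  have key : 2 * lam * (w * (1 - w) * dGfun k p w) - lam^2 * (k * w * (1 - w))
      = w * (1 - w) * dGfun k p w ^ 2 / k := by
    rw [hlam]; field_simp; ring
  linarith [hnn, key]

lemma weight_meas : Measurable (fun w : ℝ => 1 / (Real.pi * Real.sqrt (w * (1 - w)))) := by
  simp only [one_div]
  exact (measurable_const.mul
    ((Real.continuous_sqrt.comp (continuous_id.mul (continuous_const.sub continuous_id))).measurable)).inv

theorem arcsine_cauchy_schwarz_bound (k : ℕ) (hk : 1 ≤ k) (p : ℕ → ℝ)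
    (hp : ∀ z ≤ k, p z ∈ Set.Icc (0 : ℝ) 1) (h0 : p 0 = 0) (hk1 : p k = 1) :
    (∫ w in (0:ℝ)..1,
        (∑ z ∈ Finset.range (k + 1),
            alph k z w * (p z - ∑ z' ∈ Finset.range (k + 1), alph k z' w * p z') ^ 2)
          * (1 / (Real.pi * Real.sqrt (w * (1 - w)))))
      ≥ 1 / (k * Real.pi ^ 2) := by
  have hπ : (0:ℝ) < Real.pi := Real.pi_pos
  have hk0 : (0:ℝ) < k := by exact_mod_cast hk
  set f : ℝ → ℝ := fun w => Vfun k p w * (1 / (Real.pi * Real.sqrt (w * (1 - w)))) with hf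
  set h : ℝ → ℝ := fun w => 2 / (k * Real.pi ^ 2) * dGfun k p w
    - 1 / (k * Real.pi ^ 3) * (1 / Real.sqrt (w * (1 - w))) with hh
  have hgoal : (∫ w in (0:ℝ)..1,
        (∑ z ∈ Finset.range (k + 1),
            alph k z w * (p z - ∑ z' ∈ Finset.range (k + 1), alph k z' w * p z') ^ 2)
          * (1 / (Real.pi * Real.sqrt (w * (1 - w))))) = ∫ w in (0:ℝ)..1, f w := rfl
  rw [hgoal]
  -- integrability of h
  have hint_dG := (dGfun_cont k p).intervalIntegrable (μ := volume) 0 1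
  have hint_h : IntervalIntegrable h volume 0 1 :=
    (hint_dG.const_mul _).sub (arcsine_intble.const_mul _)
  -- integrability of f
  have hint_f : IntervalIntegrable f volume 0 1 := by
    rw [intervalIntegrable_iff_integrableOn_Ioc_of_le (by norm_num)]
    have hg : IntegrableOn (fun w : ℝ => 1 / Real.pi * (1 / Real.sqrt (w * (1 - w))))
        (Ioc (0:ℝ) 1) volume := by
      have := arcsine_intble.const_mul (1 / Real.pi)
      rwa [intervalIntegrable_iff_integrableOn_Ioc_of_le (by norm_num)] at this
    refine hg.integrable.mono' ?_ ?_
    · exact ((Vfun_cont k p).measurable.mul weight_meas).aestronglyMeasurable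
    · refine (ae_restrict_iff' measurableSet_Ioc).2 (Filter.Eventually.of_forall ?_)
      rintro w ⟨hw0, hw1⟩
      have hw : w ∈ Icc (0:ℝ) 1 := ⟨hw0.le, hw1⟩
      have hs : (0:ℝ) ≤ Real.sqrt (w * (1 - w)) := Real.sqrt_nonneg _
      have hwt : (0:ℝ) ≤ 1 / (Real.pi * Real.sqrt (w * (1 - w))) := by positivity
      have hV0 := Vfun_nonneg k p hw
      have hV1 := Vfun_le_one k p hp hw
      rw [hf, Real.norm_eq_abs, abs_of_nonneg (mul_nonneg hV0 hwt)]
      calc Vfun k p w * (1 / (Real.pi * Real.sqrt (w * (1 - w))))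
          ≤ 1 * (1 / (Real.pi * Real.sqrt (w * (1 - w)))) :=
            mul_le_mul_of_nonneg_right hV1 hwt
        _ = 1 / Real.pi * (1 / Real.sqrt (w * (1 - w))) := by
            rw [one_mul, one_div, mul_inv, ← one_div, ← one_div]
  -- pointwise bound on Ioo
  have hpt : ∀ w ∈ Ioo (0:ℝ) 1, h w ≤ f w := by
    rintro w ⟨hw0, hw1⟩
    have hw : w ∈ Icc (0:ℝ) 1 := ⟨hw0.le, hw1.le⟩
    set s : ℝ := Real.sqrt (w * (1 - w)) with hsdef
    have hs : 0 < s := Real.sqrt_pos.2 (by nlinarith)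
    have hs2 : s ^ 2 = w * (1 - w) := Real.sq_sqrt (by nlinarith)
    have hlow := Vfun_lower k hk p hw
    have hwt : (0:ℝ) < 1 / (Real.pi * s) := by positivity
    have step1 : (w * (1 - w) * dGfun k p w ^ 2 / k) * (1 / (Real.pi * s)) ≤ f w :=
      mul_le_mul_of_nonneg_right hlow hwt.le
    have step2 : (w * (1 - w) * dGfun k p w ^ 2 / k) * (1 / (Real.pi * s))
        = s * dGfun k p w ^ 2 / (k * Real.pi) := by
      rw [← hs2]; field_simp
    have step3 : h w ≤ s * dGfun k p w ^ 2 / (k * Real.pi) := by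
      have expand : s * dGfun k p w ^ 2 / (k * Real.pi) - h w
          = (s * dGfun k p w - 1 / Real.pi) ^ 2 / (k * Real.pi * s) := by
        simp only [hh, ← hsdef]
        field_simp
        ring
      nlinarith [div_nonneg (sq_nonneg (s * dGfun k p w - 1 / Real.pi))
        (by positivity : (0:ℝ) ≤ k * Real.pi * s), expand]
    calc h w ≤ s * dGfun k p w ^ 2 / (k * Real.pi) := step3
      _ = (w * (1 - w) * dGfun k p w ^ 2 / k) * (1 / (Real.pi * s)) := step2.symm
      _ ≤ f w := step1
  -- ae version and monotonicity
  have hae : h ≤ᵐ[volume.restrict (Icc (0:ℝ) 1)] f := by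
    have hre : volume.restrict (Icc (0:ℝ) 1) = volume.restrict (Ioo (0:ℝ) 1) :=
      (Measure.restrict_congr_set Ioo_ae_eq_Icc).symm
    rw [hre]
    filter_upwards [ae_restrict_mem measurableSet_Ioo] with w hw
    exact hpt w hw
  have hmono := intervalIntegral.integral_mono_ae_restrict (by norm_num : (0:ℝ) ≤ 1)
    hint_h hint_f hae
  -- compute ∫ h
  have hIh : ∫ w in (0:ℝ)..1, h w = 1 / (k * Real.pi ^ 2) := by
    rw [hh]
    rw [intervalIntegral.integral_sub (hint_dG.const_mul _) (arcsine_intble.const_mul _),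
      intervalIntegral.integral_const_mul, intervalIntegral.integral_const_mul,
      dGfun_FTC k p h0 hk1, arcsine_integral]
    field_simp
    ring
  rw [ge_iff_le, ← hIh]
  exact hmono
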